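/- The rational function f(x) = x^3(x+6)^3(x^2-6x+36)^3 / ((x-3)^3(x^2+3x+9)^3) over ℚ satisfies both f = g1 ∘ g2 ∘ g3 with g1(x) = x^3, g2(x) = x(x-12)/(x-3), g3(x) = x(x+6)/(x-3), and f = h1 ∘ h2 with h1(x) = x^3(x+24)/(x-3), h2(x) = x(x^2-6x+36)/(x^2+3x+9). -/

import Mathlib

lemma aux_X_sub_3_ne_zero : (RatFunc.X - 3 : RatFunc ℚ) ≠ 0 := by
  have : (RatFunc.X - 3 : RatFunc ℚ) = algebraMap (Polynomial ℚ) _ (Polynomial.X - 3) := by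
    simp [map_ofNat]
  rw [this]
  apply RatFunc.algebraMap_ne_zero
  intro h
  have := congrArg (Polynomial.eval 0) h
  simp at this

lemma aux_quad_ne_zero : (RatFunc.X ^ 2 + 3 * RatFunc.X + 9 : RatFunc ℚ) ≠ 0 := by
  have : (RatFunc.X ^ 2 + 3 * RatFunc.X + 9 : RatFunc ℚ) =
      algebraMap (Polynomial ℚ) _ (Polynomial.X ^ 2 + 3 * Polynomial.X + 9) := by
    simp [map_ofNat]
  rw [this]
  apply RatFunc.algebraMap_ne_zero
  intro h
  have := congrArg (Polynomial.eval 0) h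
  simp at this

/-- Gutierrez–Sevilla example: the rational function
f = x^3(x+6)^3(x^2-6x+36)^3 / ((x-3)^3(x^2+3x+9)^3) over ℚ has the two decompositions
f = g1 ∘ g2 ∘ g3 and f = h1 ∘ h2. -/
theorem stmt_1 :
    let x : RatFunc ℚ := RatFunc.X
    let f : RatFunc ℚ :=
      (x ^ 3 * (x + 6) ^ 3 * (x ^ 2 - 6 * x + 36) ^ 3) /
        ((x - 3) ^ 3 * (x ^ 2 + 3 * x + 9) ^ 3)
    let g1 : RatFunc ℚ → RatFunc ℚ := fun t => t ^ 3
    let g2 : RatFunc ℚ → RatFunc ℚ := fun t => t * (t - 12) / (t - 3)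
    let g3 : RatFunc ℚ := x * (x + 6) / (x - 3)
    let h1 : RatFunc ℚ → RatFunc ℚ := fun t => t ^ 3 * (t + 24) / (t - 3)
    let h2 : RatFunc ℚ := x * (x ^ 2 - 6 * x + 36) / (x ^ 2 + 3 * x + 9)
    f = g1 (g2 g3) ∧ f = h1 h2 := by
  intro x f g1 g2 g3 h1 h2
  have hx : x - 3 ≠ 0 := aux_X_sub_3_ne_zero
  have hq : x ^ 2 + 3 * x + 9 ≠ 0 := aux_quad_ne_zero
  constructor
  · show f = (g3 * (g3 - 12) / (g3 - 3)) ^ 3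
    have e1 : g3 - 12 = (x ^ 2 - 6 * x + 36) / (x - 3) := by
      show x * (x + 6) / (x - 3) - 12 = _
      rw [div_sub' hx, div_eq_div_iff hx hx]; ring
    have e2 : g3 - 3 = (x ^ 2 + 3 * x + 9) / (x - 3) := by
      show x * (x + 6) / (x - 3) - 3 = _
      rw [div_sub' hx, div_eq_div_iff hx hx]; ring
    have e3 : g3 = x * (x + 6) / (x - 3) := rfl
    rw [e1, e2, e3, div_mul_div_comm, div_div_div_eq, div_pow,
      div_eq_div_iff (mul_ne_zero (pow_ne_zero _ hx) (pow_ne_zero _ hq)) (pow_ne_zero _ (mul_ne_zero (mul_ne_zero hx hx) hq))]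
    ring
  · show f = h2 ^ 3 * (h2 + 24) / (h2 - 3)
    have e1 : h2 + 24 = (x + 6) ^ 3 / (x ^ 2 + 3 * x + 9) := by
      show x * (x ^ 2 - 6 * x + 36) / (x ^ 2 + 3 * x + 9) + 24 = _
      rw [div_add' _ _ _ hq, div_eq_div_iff hq hq]; ring
    have e2 : h2 - 3 = (x - 3) ^ 3 / (x ^ 2 + 3 * x + 9) := by
      show x * (x ^ 2 - 6 * x + 36) / (x ^ 2 + 3 * x + 9) - 3 = _
      rw [div_sub' hq, div_eq_div_iff hq hq]; ring
    have e3 : h2 = x * (x ^ 2 - 6 * x + 36) / (x ^ 2 + 3 * x + 9) := rfl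
    rw [e1, e2, e3, div_pow, div_mul_div_comm, div_div_div_eq,
      div_eq_div_iff (mul_ne_zero (pow_ne_zero _ hx) (pow_ne_zero _ hq)) (mul_ne_zero (mul_ne_zero (pow_ne_zero _ hq) hq) (pow_ne_zero _ hx))]
    ring
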